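/- Let T be a locally compact Hausdorff space and let σ : dom(σ) → ran(σ) be a partial local homeomorphism on T. Then the Renault-Deaconu groupoid Γ(T,σ), equipped with the topology generated by the basic sets U(U,V,k_1,k_2), is a locally compact Hausdorff space, each basic set U(U,V,k_1,k_2) is open, and the first-coordinate projection (t_1,n,t_2) ↦ t_1 from Γ(T,σ) to T is a local homeomorphism; in particular the range map of Γ(T,σ) is a local homeomorphism onto the unit space, i.e., Γ(T,σ) is étale. -/

import Mathlib

open Set Topology Filter

namespace TopGraphPaper

variable {T : Type*}

/-- The domain `dom(σ^k)` of the `k`-th iterate of a partial map with domain `Sdom`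
(represented by a total map `f` whose values outside `Sdom` are irrelevant). -/
def domIter (Sdom : Set T) (f : T → T) : ℕ → Set T
  | 0 => Set.univ
  | k + 1 => Sdom ∩ f ⁻¹' domIter Sdom f k

/-- The underlying set of the Renault-Deaconu groupoid `Γ(T, σ)`. -/
def RDRel (Sdom : Set T) (f : T → T) : Set (T × ℤ × T) :=
  {x | ∃ k1 k2 : ℕ, x.2.1 = (k1 : ℤ) - (k2 : ℤ) ∧ x.1 ∈ domIter Sdom f k1 ∧
    x.2.2 ∈ domIter Sdom f k2 ∧ f^[k1] x.1 = f^[k2] x.2.2}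

/-- The Renault-Deaconu groupoid `Γ(T, σ)` as a type. -/
structure RDSpace (Sdom : Set T) (f : T → T) : Type _ where
  x : T × ℤ × T
  mem : x ∈ RDRel Sdom f

/-- The basic set `𝒰(U, W, k₁, k₂)` of the Renault-Deaconu groupoid. -/
def RDBasic (Sdom : Set T) (f : T → T) (U W : Set T) (k1 k2 : ℕ) :
    Set (RDSpace Sdom f) :=
  {g | g.x.1 ∈ U ∧ g.x.2.2 ∈ W ∧ g.x.2.1 = (k1 : ℤ) - (k2 : ℤ) ∧
    f^[k1] g.x.1 = f^[k2] g.x.2.2}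

variable [TopologicalSpace T]

/-- The topology of the Renault-Deaconu groupoid, generated by the basic sets
`𝒰(U, W, k₁, k₂)` where `U ⊆ dom(σ^{k₁})`, `W ⊆ dom(σ^{k₂})` are open, `σ^{k₁}` is
injective on `U` and `σ^{k₂}` is injective on `W`. -/
instance (Sdom : Set T) (f : T → T) : TopologicalSpace (RDSpace Sdom f) :=
  TopologicalSpace.generateFrom
    {A | ∃ (U W : Set T) (k1 k2 : ℕ), IsOpen U ∧ IsOpen W ∧
      U ⊆ domIter Sdom f k1 ∧ W ⊆ domIter Sdom f k2 ∧
      Set.InjOn f^[k1] U ∧ Set.InjOn f^[k2] W ∧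
      A = RDBasic Sdom f U W k1 k2}

/-- The range map of the Renault-Deaconu groupoid, `(t₁, n, t₂) ↦ (t₁, 0, t₁)`. -/
def RDRange (Sdom : Set T) (f : T → T) (g : RDSpace Sdom f) : RDSpace Sdom f :=
  ⟨(g.x.1, 0, g.x.1), 0, 0, by norm_num, Set.mem_univ _, Set.mem_univ _, rfl⟩


-- helpers
variable {Sdom : Set T} {f : T → T}

theorem RDSpace.ext' {g h : RDSpace Sdom f} (H : g.x = h.x) : g = h := by
  cases g; cases h; cases H; rfl

theorem mem_domIter_add {k j : ℕ} {t : T} :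
    t ∈ domIter Sdom f (k + j) ↔ t ∈ domIter Sdom f k ∧ f^[k] t ∈ domIter Sdom f j := by
  induction k generalizing t with
  | zero => simp [domIter]
  | succ k ih =>
      have h : k + 1 + j = (k + j) + 1 := by omega
      rw [h]
      simp only [domIter, mem_inter_iff, mem_preimage, ih, Function.iterate_succ_apply]
      tauto

theorem domIter_anti {k m : ℕ} (h : k ≤ m) : domIter Sdom f m ⊆ domIter Sdom f k := by
  obtain ⟨j, rfl⟩ := Nat.exists_eq_add_of_le h
  exact fun t ht => (mem_domIter_add.mp ht).1

theorem locHom1 (hdom : IsOpen Sdom) (hf : IsLocalHomeomorph (Sdom.restrict f)) :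
    IsLocalHomeomorphOn f Sdom := by
  refine IsLocalHomeomorphOn.mk f Sdom fun t ht => ?_
  haveI : Nonempty ↥Sdom := ⟨⟨t, ht⟩⟩
  obtain ⟨e', ht', hfe'⟩ := hf ⟨t, ht⟩
  set ph := hdom.isOpenEmbedding_subtypeVal.toOpenPartialHomeomorph with hph
  refine ⟨ph.symm.trans e', ?_, ?_⟩
  · rw [OpenPartialHomeomorph.trans_source]
    constructor
    · show t ∈ ph.symm.source
      rw [OpenPartialHomeomorph.symm_source]
      show t ∈ ph.target
      rw [Topology.IsOpenEmbedding.toOpenPartialHomeomorph_target, Subtype.range_val]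
      exact ht
    · rw [mem_preimage]
      have : ph.symm t = ⟨t, ht⟩ :=
        hdom.isOpenEmbedding_subtypeVal.toOpenPartialHomeomorph_left_inv (x := ⟨t, ht⟩)
      rw [this]
      exact ht'
  · intro y hy
    rw [OpenPartialHomeomorph.trans_source] at hy
    have hy1 : y ∈ ph.target := by
      have := hy.1; rwa [OpenPartialHomeomorph.symm_source] at this
    have hval : (ph.symm y : T) = y := by
      refine Topology.IsOpenEmbedding.toOpenPartialHomeomorph_right_inv Subtype.val hdom.isOpenEmbedding_subtypeVal ?_
      rwa [Topology.IsOpenEmbedding.toOpenPartialHomeomorph_target] at hy1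
    calc f y = Sdom.restrict f (ph.symm y) := by
            show f y = f (ph.symm y : T); rw [hval]
      _ = e' (ph.symm y) := by rw [hfe']
      _ = (ph.symm.trans e') y := rfl

theorem locHomOn (hdom : IsOpen Sdom) (hf : IsLocalHomeomorph (Sdom.restrict f)) :
    ∀ k : ℕ, IsLocalHomeomorphOn f^[k] (domIter Sdom f k)
  | 0 => fun x _ => ⟨OpenPartialHomeomorph.refl T, mem_univ x, by
      rw [Function.iterate_zero]; rfl⟩
  | (k+1) => by
      have h := (locHomOn hdom hf k).comp ((locHom1 hdom hf).mono inter_subset_left)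
        (fun t (ht : t ∈ Sdom ∩ f ⁻¹' domIter Sdom f k) => ht.2)
      rw [← Function.iterate_succ] at h
      exact h

theorem isOpen_domIter (hdom : IsOpen Sdom) (hf : IsLocalHomeomorph (Sdom.restrict f)) :
    ∀ k : ℕ, IsOpen (domIter Sdom f k)
  | 0 => isOpen_univ
  | (k+1) => (locHom1 hdom hf).continuousOn.isOpen_inter_preimage hdom
      (isOpen_domIter hdom hf k)

theorem exists_chart (hdom : IsOpen Sdom) (hf : IsLocalHomeomorph (Sdom.restrict f))
    {k : ℕ} {t : T} (ht : t ∈ domIter Sdom f k) :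
    ∃ e : OpenPartialHomeomorph T T, t ∈ e.source ∧ e.source ⊆ domIter Sdom f k ∧ f^[k] = ↑e := by
  obtain ⟨e, hte, hfe⟩ := locHomOn hdom hf k t ht
  refine ⟨e.restrOpen (domIter Sdom f k) (isOpen_domIter hdom hf k), ?_, ?_, ?_⟩
  · rw [e.restrOpen_source]; exact ⟨hte, ht⟩
  · rw [e.restrOpen_source]; exact inter_subset_right
  · exact hfe

theorem isOpen_basic {U W : Set T} {k1 k2 : ℕ} (hUo : IsOpen U) (hWo : IsOpen W)
    (hU : U ⊆ domIter Sdom f k1) (hW : W ⊆ domIter Sdom f k2)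
    (hiU : Set.InjOn f^[k1] U) (hiW : Set.InjOn f^[k2] W) :
    IsOpen (RDBasic Sdom f U W k1 k2) :=
  TopologicalSpace.isOpen_generateFrom_of_mem ⟨U, W, k1, k2, hUo, hWo, hU, hW, hiU, hiW, rfl⟩


theorem exists_basic_nhd (hdom : IsOpen Sdom) (hf : IsLocalHomeomorph (Sdom.restrict f))
    (g : RDSpace Sdom f) {V₁ V₂ : Set T}
    (hV₁ : IsOpen V₁) (hV₂ : IsOpen V₂) (h1 : g.x.1 ∈ V₁) (h2 : g.x.2.2 ∈ V₂) :
    ∃ B : Set (RDSpace Sdom f), IsOpen B ∧ g ∈ B ∧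
      B ⊆ {h | h.x.1 ∈ V₁ ∧ h.x.2.2 ∈ V₂ ∧ h.x.2.1 = g.x.2.1} := by
  obtain ⟨k1, k2, hn, hm1, hm2, heq⟩ := g.mem
  obtain ⟨e1, ht1, hs1, hfe1⟩ := exists_chart hdom hf hm1
  obtain ⟨e2, ht2, hs2, hfe2⟩ := exists_chart hdom hf hm2
  refine ⟨RDBasic Sdom f (e1.source ∩ V₁) (e2.source ∩ V₂) k1 k2,
    isOpen_basic (e1.open_source.inter hV₁) (e2.open_source.inter hV₂)
      (inter_subset_left.trans hs1) (inter_subset_left.trans hs2)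
      (by rw [hfe1]; exact e1.injOn.mono inter_subset_left)
      (by rw [hfe2]; exact e2.injOn.mono inter_subset_left),
    ⟨⟨ht1, h1⟩, ⟨ht2, h2⟩, hn, heq⟩,
    fun h hh => ⟨hh.1.2, hh.2.1.2, by rw [hh.2.2.1, hn]⟩⟩

theorem continuous_proj1 (hdom : IsOpen Sdom) (hf : IsLocalHomeomorph (Sdom.restrict f)) :
    Continuous fun g : RDSpace Sdom f => g.x.1 := by
  rw [continuous_def]
  intro V hV
  rw [isOpen_iff_forall_mem_open]
  intro g hg
  obtain ⟨B, hBo, hgB, hBsub⟩ := exists_basic_nhd hdom hf g hV isOpen_univ hg (mem_univ _)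
  exact ⟨B, fun h hh => (hBsub hh).1, hBo, hgB⟩

theorem continuous_proj3 (hdom : IsOpen Sdom) (hf : IsLocalHomeomorph (Sdom.restrict f)) :
    Continuous fun g : RDSpace Sdom f => g.x.2.2 := by
  rw [continuous_def]
  intro V hV
  rw [isOpen_iff_forall_mem_open]
  intro g hg
  obtain ⟨B, hBo, hgB, hBsub⟩ := exists_basic_nhd hdom hf g isOpen_univ hV (mem_univ _) hg
  exact ⟨B, fun h hh => (hBsub hh).2.1, hBo, hgB⟩

theorem continuous_projZ (hdom : IsOpen Sdom) (hf : IsLocalHomeomorph (Sdom.restrict f)) :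
    Continuous fun g : RDSpace Sdom f => g.x.2.1 := by
  rw [continuous_def]
  intro V _
  rw [isOpen_iff_forall_mem_open]
  intro g hg
  obtain ⟨B, hBo, hgB, hBsub⟩ := exists_basic_nhd hdom hf g isOpen_univ isOpen_univ
    (mem_univ _) (mem_univ _)
  exact ⟨B, fun h hh => by rw [mem_preimage, (hBsub hh).2.2]; exact hg, hBo, hgB⟩

theorem continuous_into {X : Type*} [TopologicalSpace X] (hdom : IsOpen Sdom)
    (hf : IsLocalHomeomorph (Sdom.restrict f)) {a b : X → T} {k1 k2 : ℕ}
    (ha : Continuous a) (hb : Continuous b) (hma : ∀ x, a x ∈ domIter Sdom f k1)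
    (hmb : ∀ x, b x ∈ domIter Sdom f k2) (hab : ∀ x, f^[k1] (a x) = f^[k2] (b x)) :
    Continuous fun x => (⟨(a x, (k1 : ℤ) - (k2 : ℤ), b x),
      k1, k2, rfl, hma x, hmb x, hab x⟩ : RDSpace Sdom f) := by
  refine continuous_generateFrom_iff.mpr ?_
  rintro A ⟨U', W', k1', k2', hU'o, hW'o, hU's, hW's, hiU', hiW', rfl⟩
  by_cases hn : (k1 : ℤ) - (k2 : ℤ) = (k1' : ℤ) - (k2' : ℤ)
  · rcases le_total k1 k1' with hle | hle
    · -- k1' = k1 + j, automatic equality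
      obtain ⟨j, hj1⟩ : ∃ j, k1' = j + k1 := ⟨k1' - k1, by omega⟩
      have hj2 : k2' = j + k2 := by omega
      have hset : (fun x => (⟨(a x, (k1 : ℤ) - (k2 : ℤ), b x),
            k1, k2, rfl, hma x, hmb x, hab x⟩ : RDSpace Sdom f)) ⁻¹'
            RDBasic Sdom f U' W' k1' k2' = a ⁻¹' U' ∩ b ⁻¹' W' := by
        ext x
        constructor
        · rintro ⟨hx1, hx2, _, _⟩
          exact ⟨hx1, hx2⟩
        · rintro ⟨hx1, hx2⟩
          refine ⟨hx1, hx2, hn, ?_⟩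
          show f^[k1'] (a x) = f^[k2'] (b x)
          rw [hj1, hj2, Function.iterate_add_apply, Function.iterate_add_apply, hab x]
      rw [hset]
      exact (hU'o.preimage ha).inter (hW'o.preimage hb)
    · -- k1 = j + k1'
      obtain ⟨j, hj1⟩ : ∃ j, k1 = j + k1' := ⟨k1 - k1', by omega⟩
      have hj2 : k2 = j + k2' := by omega
      have hj1' : k1 = k1' + j := by omega
      have hj2' : k2 = k2' + j := by omega
      have hca : Continuous fun x => f^[k1'] (a x) :=
        ((locHomOn hdom hf k1').continuousOn).comp_continuous ha
          (fun x => domIter_anti (by omega) (hma x))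
      have hcb : Continuous fun x => f^[k2'] (b x) :=
        ((locHomOn hdom hf k2').continuousOn).comp_continuous hb
          (fun x => domIter_anti (by omega) (hmb x))
      rw [isOpen_iff_forall_mem_open]
      intro x₀ hx₀
      obtain ⟨h01, h02, _, h04⟩ := hx₀
      have hp0 : f^[k1'] (a x₀) ∈ domIter Sdom f j := by
        have := hma x₀
        rw [hj1'] at this
        exact (mem_domIter_add.mp this).2
      obtain ⟨e, hpe, hes, hfe⟩ := exists_chart hdom hf hp0
      have hinj : Set.InjOn f^[j] e.source := by rw [hfe]; exact e.injOn
      have h04' : f^[k1'] (a x₀) = f^[k2'] (b x₀) := h04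
      refine ⟨a ⁻¹' U' ∩ b ⁻¹' W' ∩ (fun x => f^[k1'] (a x)) ⁻¹' e.source ∩
        (fun x => f^[k2'] (b x)) ⁻¹' e.source, ?_, ?_,
        ⟨⟨⟨h01, h02⟩, hpe⟩, show f^[k2'] (b x₀) ∈ e.source from h04' ▸ hpe⟩⟩
      · rintro x ⟨⟨⟨hx1, hx2⟩, hx3⟩, hx4⟩
        refine ⟨hx1, hx2, hn, ?_⟩
        show f^[k1'] (a x) = f^[k2'] (b x)
        refine hinj hx3 hx4 ?_
        show f^[j] (f^[k1'] (a x)) = f^[j] (f^[k2'] (b x))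
        rw [← Function.iterate_add_apply, ← Function.iterate_add_apply, ← hj1, ← hj2]
        exact hab x
      · exact (((hU'o.preimage ha).inter (hW'o.preimage hb)).inter
          (e.open_source.preimage hca)).inter (e.open_source.preimage hcb)
  · -- empty preimage
    convert isOpen_empty
    ext x
    simp only [mem_preimage, mem_empty_iff_false, iff_false]
    rintro ⟨_, _, hx3, _⟩
    exact hn hx3


theorem proj1_localHomeo (hdom : IsOpen Sdom) (hf : IsLocalHomeomorph (Sdom.restrict f)) :
    IsLocalHomeomorph fun g : RDSpace Sdom f => g.x.1 := by
  intro g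
  obtain ⟨k1, k2, hn, hm1, hm2, heq⟩ := g.mem
  obtain ⟨e1, ht1, hs1, hfe1⟩ := exists_chart hdom hf hm1
  obtain ⟨e2, ht2, hs2, hfe2⟩ := exists_chart hdom hf hm2
  classical
  set U : Set T := e1.source ∩ f^[k1] ⁻¹' e2.target with hUdef
  have hcont1 : ContinuousOn f^[k1] e1.source := by
    rw [hfe1]; exact e1.continuousOn
  have hUopen : IsOpen U := hcont1.isOpen_inter_preimage e1.open_source e2.open_target
  have hUsub : U ⊆ domIter Sdom f k1 := inter_subset_left.trans hs1
  have hWmem : ∀ t ∈ U, e2.symm (f^[k1] t) ∈ e2.source := fun t ht => e2.map_target ht.2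
  have hWeq : ∀ t ∈ U, f^[k1] t = f^[k2] (e2.symm (f^[k1] t)) := fun t ht => by
    rw [hfe2]; exact (e2.right_inv ht.2).symm
  have hinj2 : Set.InjOn f^[k2] e2.source := by rw [hfe2]; exact e2.injOn
  have hBopen : IsOpen (RDBasic Sdom f U e2.source k1 k2) :=
    isOpen_basic hUopen e2.open_source hUsub hs2
      (by rw [hfe1]; exact e1.injOn.mono inter_subset_left) hinj2
  have hgU : g.x.1 ∈ U := ⟨ht1, by
    rw [mem_preimage, heq, hfe2]; exact e2.map_source ht2⟩
  refine ⟨⟨⟨⟨fun h => h.x.1,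
      fun t => if h : t ∈ U then ⟨(t, (k1 : ℤ) - (k2 : ℤ), e2.symm (f^[k1] t)),
        k1, k2, rfl, hUsub h, hs2 (hWmem t h), hWeq t h⟩ else g,
      RDBasic Sdom f U e2.source k1 k2, U,
      fun h hh => hh.1,
      fun t ht => ?_,
      fun h hh => ?_,
      fun t ht => by simp only [dif_pos ht]⟩,
    (continuous_proj1 hdom hf).continuousOn, ?_⟩,
    hBopen, hUopen⟩,
    ⟨hgU, ht2, hn, heq⟩, rfl⟩
  · -- map_target'
    simp only [dif_pos ht]
    exact ⟨ht, hWmem t ht, rfl, hWeq t ht⟩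
  · -- left_inv'
    obtain ⟨hh1, hh2, hh3, hh4⟩ := hh
    simp only [dif_pos hh1]
    refine RDSpace.ext' ?_
    have hsym : e2.symm (f^[k1] h.x.1) = h.x.2.2 := by
      rw [hh4, hfe2]; exact e2.left_inv hh2
    exact Prod.ext rfl (Prod.ext hh3.symm hsym)
  · -- continuousOn_invFun
    rw [continuousOn_iff_continuous_restrict]
    have hacont : Continuous fun x : U => f^[k1] (x : T) :=
      hcont1.comp_continuous continuous_subtype_val fun x => x.2.1
    have hbcont : Continuous fun x : U => e2.symm (f^[k1] (x : T)) :=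
      e2.continuousOn_symm.comp_continuous hacont fun x => x.2.2
    refine (continuous_into hdom hf continuous_subtype_val hbcont
      (fun x : U => hUsub x.2) (fun x : U => hs2 (hWmem _ x.2)) (fun x : U => hWeq _ x.2)).congr ?_
    intro x
    simp only [Set.restrict_apply, dif_pos x.2]


/-- The unit-space inclusion `t ↦ (t, 0, t)`. -/
def RDUnit (Sdom : Set T) (f : T → T) (t : T) : RDSpace Sdom f :=
  ⟨(t, (0 : ℤ) - (0 : ℤ), t), 0, 0, rfl, Set.mem_univ _, Set.mem_univ _, rfl⟩

theorem RDUnit_image (V : Set T) :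
    RDUnit Sdom f '' V = RDBasic Sdom f V V 0 0 := by
  ext h
  constructor
  · rintro ⟨t, ht, rfl⟩
    exact ⟨ht, ht, rfl, rfl⟩
  · rintro ⟨h1, h2, h3, h4⟩
    refine ⟨h.x.1, h1, RDSpace.ext' ?_⟩
    have h4' : h.x.1 = h.x.2.2 := h4
    exact Prod.ext rfl (Prod.ext h3.symm h4')

theorem RDUnit_isOpenEmbedding (hdom : IsOpen Sdom)
    (hf : IsLocalHomeomorph (Sdom.restrict f)) :
    IsOpenEmbedding (RDUnit Sdom f) := by
  refine IsOpenEmbedding.of_continuous_injective_isOpenMap ?_ ?_ ?_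
  · exact continuous_into hdom hf continuous_id continuous_id
      (fun _ => mem_univ _) (fun _ => mem_univ _) (fun _ => rfl)
  · intro t t' h
    exact congrArg (fun g : RDSpace Sdom f => g.x.1) h
  · intro V hV
    rw [RDUnit_image]
    exact isOpen_basic hV hV (subset_univ _) (subset_univ _)
      (fun a _ b _ h => by simpa using h) (fun a _ b _ h => by simpa using h)

theorem rdrange_eq : RDRange Sdom f = RDUnit Sdom f ∘ fun g : RDSpace Sdom f => g.x.1 := by
  funext g
  exact RDSpace.ext' (Prod.ext rfl (Prod.ext (show (0:ℤ) = 0 - 0 by norm_num) rfl))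

theorem rd_t2 (hdom : IsOpen Sdom) (hf : IsLocalHomeomorph (Sdom.restrict f))
    [T2Space T] : T2Space (RDSpace Sdom f) := by
  have hx : Continuous fun g : RDSpace Sdom f => g.x := by
    exact (continuous_proj1 hdom hf).prodMk
      ((continuous_projZ hdom hf).prodMk (continuous_proj3 hdom hf))
  exact ⟨fun g g' hne =>
    separated_by_continuous hx fun h => hne (RDSpace.ext' h)⟩

theorem rd_locallyCompact (hdom : IsOpen Sdom) (hf : IsLocalHomeomorph (Sdom.restrict f))
    [LocallyCompactSpace T] : LocallyCompactSpace (RDSpace Sdom f) := by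
  refine ⟨fun g N hN => ?_⟩
  obtain ⟨e, hg, hfe⟩ := proj1_localHomeo hdom hf g
  have hmap : map e.symm (𝓝 (e g)) = 𝓝 g := e.symm_map_nhds_eq hg
  have hN' : e.symm ⁻¹' N ∈ 𝓝 (e g) := by
    rw [← hmap] at hN; exact hN
  obtain ⟨K, hK𝓝, hKsub, hKcpt⟩ := LocallyCompactSpace.local_compact_nhds (e g)
    (e.symm ⁻¹' N ∩ e.target) (inter_mem hN' (e.open_target.mem_nhds (e.map_source hg)))
  refine ⟨e.symm '' K, ?_, ?_, ?_⟩
  · rw [← hmap, mem_map]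
    exact mem_of_superset hK𝓝 (subset_preimage_image _ _)
  · exact (image_mono (hKsub.trans inter_subset_left)).trans
      (image_preimage_subset _ _)
  · exact hKcpt.image_of_continuousOn
      (e.continuousOn_symm.mono (hKsub.trans inter_subset_right))

theorem rd_groupoid_etale'
    [LocallyCompactSpace T] [T2Space T]
    (hdom : IsOpen Sdom)
    (hf : IsLocalHomeomorph (Sdom.restrict f)) :
    (∀ (U W : Set T) (k1 k2 : ℕ), IsOpen U → IsOpen W →
      U ⊆ domIter Sdom f k1 → W ⊆ domIter Sdom f k2 →
      Set.InjOn f^[k1] U → Set.InjOn f^[k2] W →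
      IsOpen (RDBasic Sdom f U W k1 k2)) ∧
    LocallyCompactSpace (RDSpace Sdom f) ∧
    T2Space (RDSpace Sdom f) ∧
    IsLocalHomeomorph (fun g : RDSpace Sdom f => g.x.1) ∧
    IsLocalHomeomorph (RDRange Sdom f) := by
  refine ⟨fun U W k1 k2 hUo hWo hU hW hiU hiW => isOpen_basic hUo hWo hU hW hiU hiW,
    rd_locallyCompact hdom hf, rd_t2 hdom hf, proj1_localHomeo hdom hf, ?_⟩
  rw [rdrange_eq]
  exact ((RDUnit_isOpenEmbedding hdom hf).isLocalHomeomorph).comp (proj1_localHomeo hdom hf)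


/-- For a partial local homeomorphism `σ` on a locally compact
Hausdorff space `T`, the Renault-Deaconu groupoid `Γ(T,σ)`, with the topology generated
by the basic sets `𝒰(U, W, k₁, k₂)`, is a locally compact Hausdorff space, the basic
sets are open, and the first-coordinate projection `(t₁, n, t₂) ↦ t₁` is a local
homeomorphism; in particular the range map `(t₁, n, t₂) ↦ (t₁, 0, t₁)` of `Γ(T,σ)` is a
local homeomorphism onto the unit space, i.e. `Γ(T,σ)` is étale. -/
theorem rd_groupoid_etale
    {T : Type*} [TopologicalSpace T] [LocallyCompactSpace T] [T2Space T]
    (Sdom : Set T) (f : T → T) (hdom : IsOpen Sdom)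
    (hf : IsLocalHomeomorph (Sdom.restrict f)) :
    (∀ (U W : Set T) (k1 k2 : ℕ), IsOpen U → IsOpen W →
      U ⊆ domIter Sdom f k1 → W ⊆ domIter Sdom f k2 →
      Set.InjOn f^[k1] U → Set.InjOn f^[k2] W →
      IsOpen (RDBasic Sdom f U W k1 k2)) ∧
    LocallyCompactSpace (RDSpace Sdom f) ∧
    T2Space (RDSpace Sdom f) ∧
    IsLocalHomeomorph (fun g : RDSpace Sdom f => g.x.1) ∧
    IsLocalHomeomorph (RDRange Sdom f) := by
  exact rd_groupoid_etale' hdom hf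

end TopGraphPaper
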